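/- Let V be a real Hilbert space, a : V × V → ℝ a bounded bilinear form, and suppose there exist a bounded linear projection-type map π : V → V with finite-dimensional range and a constant C > 0 such that a(v, v) + ‖π v‖² ≥ C ‖v‖² for all v ∈ V. Then the operator A : V → V induced by a is Fredholm of index zero; in particular, if A is injective then A is invertible. -/

import Mathlib

open scoped RealInnerProductSpace

theorem core_fredholm {X : Type*} [NormedAddCommGroup X] [NormedSpace ℝ X]
    (T : X →L[ℝ] X) (W : Submodule ℝ X) [FiniteDimensional ℝ W]
    (hW : ∀ x, x - T x ∈ W) :
    FiniteDimensional ℝ (LinearMap.ker (T : X →ₗ[ℝ] X)) ∧ IsClosed (Set.range T) ∧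
    FiniteDimensional ℝ (X ⧸ LinearMap.range (T : X →ₗ[ℝ] X)) ∧
    Module.finrank ℝ (LinearMap.ker (T : X →ₗ[ℝ] X)) = Module.finrank ℝ (X ⧸ LinearMap.range (T : X →ₗ[ℝ] X)) := by
  obtain ⟨π₀, hπ₀⟩ := Submodule.ClosedComplemented.of_finiteDimensional W
  set π : X →L[ℝ] X := W.subtypeL.comp π₀ with hπdef
  have hπmem : ∀ x, π x ∈ W := fun x => (π₀ x).2
  have hπid : ∀ x ∈ W, π x = x := by
    intro x hx
    show ((π₀ x : W) : X) = x
    rw [show x = ((⟨x, hx⟩ : W) : X) from rfl, hπ₀]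
  have hTW : ∀ x ∈ W, T x ∈ W := fun x hx => by
    have : T x = x - (x - T x) := by abel
    rw [this]; exact sub_mem hx (hW x)
  set Φ : X →L[ℝ] X := T.comp π + (ContinuousLinearMap.id ℝ X - T) with hΦdef
  have hΦx : ∀ x, Φ x = T (π x) + (x - T x) := fun x => rfl
  have hΦmem : ∀ x, Φ x ∈ W := fun x => by
    rw [hΦx]; exact add_mem (hTW _ (hπmem x)) (hW x)
  have hΦid : ∀ x ∈ W, Φ x = x := fun x hx => by
    rw [hΦx, hπid x hx]; abel
  have key : ∀ y, Φ (T y) = T (π y) := by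
    intro y
    have h1 : π (T y) = π y - (y - T y) := by
      have : T y = y - (y - T y) := by abel
      conv_lhs => rw [this, map_sub, hπid _ (hW y)]
    rw [hΦx, h1, map_sub, map_sub]
    abel
  set S : Submodule ℝ X := W.map (T : X →ₗ[ℝ] X) with hSdef
  have hSfin : FiniteDimensional ℝ S := inferInstance
  have hrange : Set.range T = ⇑Φ ⁻¹' (S : Set X) := by
    ext x
    constructor
    · rintro ⟨y, rfl⟩
      show Φ (T y) ∈ S
      rw [key]
      exact Submodule.mem_map_of_mem (hπmem y)
    · intro hx
      obtain ⟨w, hw, hTw⟩ := hx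
      refine ⟨w + (x - π x), ?_⟩
      have : (T : X →ₗ[ℝ] X) w = T w := rfl
      rw [this] at hTw
      rw [map_add, hTw, hΦx, map_sub]
      abel
  set TW : W →ₗ[ℝ] W := (T : X →ₗ[ℝ] X).restrict hTW with hTWdef
  set g : W →ₗ[ℝ] X ⧸ LinearMap.range (T : X →ₗ[ℝ] X) := (LinearMap.range (T : X →ₗ[ℝ] X)).mkQ ∘ₗ W.subtype with hgdef
  have gsurj : Function.Surjective g := by
    intro z
    obtain ⟨x, rfl⟩ := Submodule.Quotient.mk_surjective _ z
    refine ⟨⟨Φ x, hΦmem x⟩, ?_⟩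
    show Submodule.Quotient.mk (Φ x) = Submodule.Quotient.mk x
    rw [Submodule.Quotient.eq]
    refine ⟨π x - x, ?_⟩
    show T (π x - x) = Φ x - x
    rw [map_sub, hΦx]; abel
  have hkerg : LinearMap.ker g = LinearMap.range TW := by
    ext w
    simp only [hgdef, LinearMap.mem_ker, LinearMap.comp_apply, Submodule.mkQ_apply,
      Submodule.Quotient.mk_eq_zero, Submodule.coe_subtype, LinearMap.mem_range]
    constructor
    · rintro ⟨y, hy⟩
      refine ⟨⟨π y, hπmem y⟩, ?_⟩
      apply Subtype.ext
      show T (π y) = (w : X)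
      rw [← key, show T y = (w : X) from hy, hΦid _ w.2]
    · rintro ⟨u, rfl⟩
      exact ⟨u, rfl⟩
  have e1 : (W ⧸ LinearMap.ker g) ≃ₗ[ℝ] X ⧸ LinearMap.range (T : X →ₗ[ℝ] X) :=
    g.quotKerEquivOfSurjective gsurj
  have hrankq : Module.finrank ℝ (X ⧸ LinearMap.range (T : X →ₗ[ℝ] X))
      = Module.finrank ℝ (W ⧸ LinearMap.ker g) := e1.symm.finrank_eq
  have h3 := Submodule.finrank_quotient_add_finrank (LinearMap.ker g)
  have h4 := LinearMap.finrank_range_add_finrank_ker TW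
  have hkerle : LinearMap.ker (T : X →ₗ[ℝ] X) ≤ W := by
    intro x hx
    have hx' : T x = 0 := hx
    have := hW x
    rwa [hx', sub_zero] at this
  have hker5 : Module.finrank ℝ (LinearMap.ker TW) = Module.finrank ℝ (LinearMap.ker (T : X →ₗ[ℝ] X)) := by
    rw [hTWdef, LinearMap.ker_restrict]
    exact (Submodule.comapSubtypeEquivOfLe hkerle).finrank_eq
  refine ⟨?_, ?_, ?_, ?_⟩
  · -- ker finite dimensional
    exact Submodule.finiteDimensional_of_le hkerle
  · rw [hrange]
    exact (S.closed_of_finiteDimensional).preimage Φ.continuous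
  · exact Module.Finite.equiv e1
  · rw [hrankq, hkerg] at *
    omega

theorem stmt_10 {X : Type*} [NormedAddCommGroup X] [InnerProductSpace ℝ X] [CompleteSpace X]
    (a : X →L[ℝ] X →L[ℝ] ℝ) (p : X →L[ℝ] X)
    (hfin : FiniteDimensional ℝ (LinearMap.range (p : X →ₗ[ℝ] X))) (C : ℝ) (hC : 0 < C)
    (hGarding : ∀ v : X, C * ‖v‖ ^ 2 ≤ a v v + ‖p v‖ ^ 2)
    (A : X →L[ℝ] X) (hA : ∀ u v : X, ⟪A u, v⟫ = a u v) :
    (FiniteDimensional ℝ (LinearMap.ker (A : X →ₗ[ℝ] X)) ∧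
      IsClosed (Set.range A) ∧
      FiniteDimensional ℝ (X ⧸ LinearMap.range (A : X →ₗ[ℝ] X)) ∧
      Module.finrank ℝ (LinearMap.ker (A : X →ₗ[ℝ] X)) = Module.finrank ℝ (X ⧸ LinearMap.range (A : X →ₗ[ℝ] X))) ∧
    (Function.Injective A → Function.Bijective A) := by
  classical
  haveI := hfin
  set B : X →L[ℝ] X := A + (ContinuousLinearMap.adjoint p).comp p with hBdef
  have hBapp : ∀ v : X, B v = A v + ContinuousLinearMap.adjoint p (p v) := fun v => rfl
  have hBinner : ∀ v : X, ⟪B v, v⟫ = a v v + ‖p v‖ ^ 2 := by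
    intro v
    rw [hBapp, inner_add_left, hA, ContinuousLinearMap.adjoint_inner_left,
      real_inner_self_eq_norm_sq]
  have hcoer : ∀ v : X, C * ‖v‖ ^ 2 ≤ ⟪B v, v⟫ := fun v => by
    rw [hBinner]; exact hGarding v
  have hbelow : ∀ v : X, C * ‖v‖ ≤ ‖B v‖ := by
    intro v
    rcases eq_or_ne v 0 with rfl | hv
    · simp
    · have h1 : C * ‖v‖ * ‖v‖ ≤ ‖B v‖ * ‖v‖ := by
        calc C * ‖v‖ * ‖v‖ = C * ‖v‖ ^ 2 := by ring
        _ ≤ ⟪B v, v⟫ := hcoer v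
        _ ≤ ‖B v‖ * ‖v‖ := real_inner_le_norm _ _
      exact le_of_mul_le_mul_right h1 (norm_pos_iff.mpr hv)
  have hanti : AntilipschitzWith C⁻¹.toNNReal B := by
    refine B.antilipschitz_of_bound fun x => ?_
    rw [Real.coe_toNNReal _ (le_of_lt (inv_pos.mpr hC))]
    calc ‖x‖ = C⁻¹ * (C * ‖x‖) := by field_simp
    _ ≤ C⁻¹ * ‖B x‖ := by
        have := hbelow x
        have h0 : (0:ℝ) ≤ C⁻¹ := le_of_lt (inv_pos.mpr hC)
        nlinarith
  have hkerB : LinearMap.ker (B : X →ₗ[ℝ] X) = ⊥ := LinearMap.ker_eq_bot.mpr hanti.injective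
  have hclosedB : IsClosed ((LinearMap.range (B : X →ₗ[ℝ] X) : Submodule ℝ X) : Set X) := by
    rw [LinearMap.coe_range]
    exact hanti.isClosed_range B.uniformContinuous
  haveI := hclosedB.completeSpace_coe
  have horth : (LinearMap.range (B : X →ₗ[ℝ] X))ᗮ = ⊥ := by
    rw [Submodule.eq_bot_iff]
    intro w hw
    have h0 : ⟪B w, w⟫ = 0 :=
      ((Submodule.mem_orthogonal _ _).mp hw) (B w) (LinearMap.mem_range_self _ w)
    have h1 := hcoer w
    rw [h0] at h1
    have hsq : ‖w‖ ^ 2 = 0 := le_antisymm (by nlinarith [sq_nonneg ‖w‖]) (sq_nonneg _)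
    have h2 : ‖w‖ = 0 := by
      have := pow_eq_zero_iff (n := 2) (by norm_num) |>.mp hsq
      exact this
    exact norm_eq_zero.mp h2
  have hrangeB : LinearMap.range (B : X →ₗ[ℝ] X) = ⊤ := by
    rw [← Submodule.orthogonal_orthogonal (LinearMap.range (B : X →ₗ[ℝ] X)), horth,
      Submodule.bot_orthogonal_eq_top]
  set e : X ≃L[ℝ] X := ContinuousLinearEquiv.ofBijective B hkerB hrangeB with hedef
  have he : ∀ x, e x = B x := fun x => rfl
  set G : X →L[ℝ] X := (e.symm : X →L[ℝ] X).comp ((ContinuousLinearMap.adjoint p).comp p)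
    with hGdef
  set T : X →L[ℝ] X := ContinuousLinearMap.id ℝ X - G with hTdef
  set W : Submodule ℝ X :=
    Submodule.map (((e.symm : X →L[ℝ] X).comp (ContinuousLinearMap.adjoint p)
      : X →L[ℝ] X) : X →ₗ[ℝ] X) (LinearMap.range (p : X →ₗ[ℝ] X)) with hWdef
  haveI : FiniteDimensional ℝ W := by
    rw [hWdef]; infer_instance
  have hGm : ∀ x, G x ∈ W := fun x =>
    ⟨p x, LinearMap.mem_range_self _ x, rfl⟩
  have hT : ∀ x, x - T x ∈ W := by
    intro x
    have hx : x - T x = G x := by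
      rw [hTdef]; simp
    rw [hx]; exact hGm x
  have hAT : ∀ x, A x = e (T x) := by
    intro x
    have hTx : T x = x - G x := rfl
    rw [hTx, map_sub]
    have h2 : e (G x) = (ContinuousLinearMap.adjoint p) (p x) := by
      show e (e.symm _) = _
      exact e.apply_symm_apply _
    rw [h2, he x, hBapp x]
    abel
  obtain ⟨hkfin, hclosed, hqfin, hrank⟩ := core_fredholm T W hT
  have hkerEq : LinearMap.ker (A : X →ₗ[ℝ] X) = LinearMap.ker (T : X →ₗ[ℝ] X) := by
    ext x
    simp only [LinearMap.mem_ker]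
    constructor
    · intro hx
      have : e (T x) = 0 := by rw [← hAT]; exact hx
      exact (map_eq_zero_iff e e.injective).mp this
    · intro hx
      show A x = 0
      rw [hAT, show T x = 0 from hx, map_zero]
  have hrangeSet : Set.range ⇑A = ⇑e '' Set.range ⇑T := by
    ext y
    constructor
    · rintro ⟨x, rfl⟩
      exact ⟨T x, ⟨x, rfl⟩, (hAT x).symm⟩
    · rintro ⟨z, ⟨x, rfl⟩, rfl⟩
      exact ⟨x, hAT x⟩
  have hAT' : ∀ x, A x = e.toLinearEquiv (T x) := fun x => hAT x
  have hmapRange : Submodule.map (e.toLinearEquiv : X →ₗ[ℝ] X) (LinearMap.range (T : X →ₗ[ℝ] X))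
      = LinearMap.range (A : X →ₗ[ℝ] X) := by
    ext y
    simp only [Submodule.mem_map, LinearMap.mem_range]
    constructor
    · rintro ⟨z, ⟨x, rfl⟩, rfl⟩
      exact ⟨x, hAT' x⟩
    · rintro ⟨x, rfl⟩
      exact ⟨T x, ⟨x, rfl⟩, (hAT' x).symm⟩
  have e2 : (X ⧸ LinearMap.range (T : X →ₗ[ℝ] X)) ≃ₗ[ℝ] (X ⧸ LinearMap.range (A : X →ₗ[ℝ] X)) :=
    Submodule.Quotient.equiv _ _ e.toLinearEquiv hmapRange
  have main : FiniteDimensional ℝ (LinearMap.ker (A : X →ₗ[ℝ] X)) ∧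
      IsClosed (Set.range A) ∧
      FiniteDimensional ℝ (X ⧸ LinearMap.range (A : X →ₗ[ℝ] X)) ∧
      Module.finrank ℝ (LinearMap.ker (A : X →ₗ[ℝ] X)) = Module.finrank ℝ (X ⧸ LinearMap.range (A : X →ₗ[ℝ] X)) := by
    refine ⟨by rw [hkerEq]; exact hkfin, ?_, Module.Finite.equiv e2, ?_⟩
    · rw [hrangeSet]
      exact e.toHomeomorph.isClosedMap _ hclosed
    · rw [hkerEq, hrank]
      exact e2.finrank_eq
  refine ⟨main, ?_⟩
  intro hinj
  refine ⟨hinj, ?_⟩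
  haveI := main.2.2.1
  have hker0 : LinearMap.ker (A : X →ₗ[ℝ] X) = ⊥ := LinearMap.ker_eq_bot.mpr hinj
  have h0 : Module.finrank ℝ (LinearMap.ker (A : X →ₗ[ℝ] X)) = 0 := by
    rw [hker0]; exact finrank_bot ℝ X
  have hq0 : Module.finrank ℝ (X ⧸ LinearMap.range (A : X →ₗ[ℝ] X)) = 0 := by
    rw [← main.2.2.2, h0]
  have hsub : Subsingleton (X ⧸ LinearMap.range (A : X →ₗ[ℝ] X)) := Module.finrank_zero_iff.mp hq0
  have htop : LinearMap.range (A : X →ₗ[ℝ] X) = ⊤ :=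
    Submodule.Quotient.subsingleton_iff.mp hsub
  exact LinearMap.range_eq_top.mp htop
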